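/- In ℂ[G_{p,n}] define Θ_i := Σ_{σ : d(σ^{−1}) = i} σ for i = 0,…,ℓ, and e_{ℓ−k} := Σ_{i=0}^{ℓ} u_{ik} Θ_i for k = 0,…,ℓ. Then: (1) the polynomial identity Σ_{i=0}^{ℓ} binom(n + (x−1)/p − i, n) Θ_i = Σ_{k=0}^{ℓ} x^{n−k} e_{ℓ−k} holds (as an identity of polynomials in x with coefficients in ℂ[G_{p,n}]); and (2) Θ_i = Σ_{k=0}^{ℓ} v_{ki} e_{ℓ−k} for each i = 0,…,ℓ. -/

import Mathlib

open scoped Classical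

noncomputable section

/-- The colored permutation group `G_{p,n}`: an element is determined by its permutation
part `σ(·)` and its colors `σ_c(·)`. -/
def GPN (p n : ℕ) : Type := Equiv.Perm (Fin n) × (Fin n → ZMod p)

namespace GPN

variable {p n : ℕ}

/-- Group law coming from composition of the corresponding bijections of
`{1,…,n} × Z_p`: `(μτ)(i) = μ(τ(i))` and `(μτ)_c(i) = μ_c(τ(i)) + τ_c(i)`. -/
instance : Group (GPN p n) where
  mul a b := (a.1 * b.1, fun i => a.2 (b.1 i) + b.2 i)
  one := (1, fun _ => 0)
  inv a := (a.1⁻¹, fun i => -a.2 (a.1⁻¹ i))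
  mul_assoc a b c := Prod.ext (mul_assoc _ _ _) (funext fun i => add_assoc _ _ _)
  one_mul a := Prod.ext (one_mul _) (funext fun i => zero_add _)
  mul_one a := Prod.ext (mul_one _) (funext fun i => add_zero _)
  inv_mul_cancel a := Prod.ext (inv_mul_cancel _)
    (funext fun i => by
      show -a.2 (a.1⁻¹ (a.1 i)) + a.2 i = 0
      rw [show a.1⁻¹ (a.1 i) = i from Equiv.symm_apply_apply a.1 i]
      exact neg_add_cancel _)

instance [NeZero p] : Fintype (GPN p n) := by unfold GPN; infer_instance

instance : DecidableEq (GPN p n) := by unfold GPN; infer_instance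

end GPN

/-- Rank of a color `r ∈ Z_p` in the order `0, p-1, p-2, …, 1` used to define
the linear order on `Σ = {1,…,n} × Z_p`. -/
def rho (p : ℕ) (r : ZMod p) : ℕ := if r = 0 then 0 else p - r.val

/-- The linear order on `Σ`: `(i,r) < (j,s)` iff the color of `r` comes strictly earlier
(in the order `0, p-1, …, 1`), or the colors agree and `i < j`. -/
def sigmaLt (p : ℕ) (x y : ℕ × ZMod p) : Prop :=
  rho p x.2 < rho p y.2 ∨ (rho p x.2 = rho p y.2 ∧ x.1 < y.1)

/-- The pair `(σ(i), σ_c(i)) ∈ {1,…,n} × Z_p`. -/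
def gpnPair {p n : ℕ} (σ : GPN p n) (i : Fin n) : ℕ × ZMod p :=
  ((σ.1 i : ℕ) + 1, σ.2 i)

/-- `σ ∈ G_{p,n}` has a d-descent at position `i+1` (positions are `1,…,n`):
for positions `< n` this means `(σ(i),σ_c(i)) > (σ(i+1),σ_c(i+1))`,
and at position `n` it means `σ_c(n) ≠ 0`. -/
def gpnHasDDescentAt {p n : ℕ} (σ : GPN p n) (i : Fin n) : Prop :=
  if h : (i : ℕ) + 1 < n then
    sigmaLt p (gpnPair σ ⟨(i : ℕ) + 1, h⟩) (gpnPair σ i)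
  else σ.2 i ≠ 0

/-- `d(σ)`, the number of d-descents of `σ ∈ G_{p,n}`. -/
def dNum {p n : ℕ} (σ : GPN p n) : ℕ :=
  (Finset.univ.filter fun i : Fin n => gpnHasDDescentAt σ i).card

/-- `Θ_i = Σ_{σ : d(σ⁻¹) = i} σ ∈ ℂ[G_{p,n}]`. -/
def Theta (p n : ℕ) [NeZero p] (i : ℕ) : MonoidAlgebra ℂ (GPN p n) :=
  ∑ σ ∈ Finset.univ.filter fun σ : GPN p n => dNum σ⁻¹ = i, MonoidAlgebra.single σ (1 : ℂ)

/-- `u_{ij} := [x^{n-j}] binom(n + (x-1)/p - i, n)`, the coefficient of `x^{n-j}` in the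
degree-`n` polynomial `(1/n!) ∏_{m=0}^{n-1} (n + (x-1)/p - i - m)`. -/
def uEnt (p n : ℕ) (i j : ℕ) : ℝ :=
  (Polynomial.C ((n.factorial : ℝ))⁻¹ *
    ∏ m ∈ Finset.range n,
      ((Polynomial.X - 1) * Polynomial.C ((p : ℝ))⁻¹ +
        Polynomial.C ((n : ℝ) - (i : ℝ) - (m : ℝ)))).coeff (n - j)

/-- `v_{ij} := [x^j]((1-x)^{n+1} A_{n-i}(x))`, where `A_m(x) = Σ_{k≥0} (pk+1)^m x^k`. -/
def vEnt (p n : ℕ) (i j : ℕ) : ℝ :=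
  PowerSeries.coeff (R := ℝ) j
    ((1 - PowerSeries.X) ^ (n + 1) * PowerSeries.mk fun a => ((p * a + 1 : ℕ) : ℝ) ^ (n - i))

/-- `e_{ℓ-k} := Σ_{i=0}^{ℓ} u_{ik} Θ_i ∈ ℂ[G_{p,n}]` (indexed here by `k`). -/
def eElt (p n : ℕ) [NeZero p] (ℓ k : ℕ) : MonoidAlgebra ℂ (GPN p n) :=
  ∑ i ∈ Finset.range (ℓ + 1), ((uEnt p n i k : ℝ) : ℂ) • Theta p n i

/-- The polynomial `binom(n + (x-1)/p - i, n) = (1/n!) ∏_{m=0}^{n-1} (n + (x-1)/p - i - m)`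
over `ℂ`. -/
def binomPolyC (p n : ℕ) (i : ℕ) : Polynomial ℂ :=
  Polynomial.C ((n.factorial : ℂ))⁻¹ *
    ∏ m ∈ Finset.range n,
      ((Polynomial.X - 1) * Polynomial.C ((p : ℂ))⁻¹ +
        Polynomial.C ((n : ℂ) - (i : ℂ) - (m : ℂ)))

/-- The polynomial `binom(n + (x-1)/p - i, n)` with (scalar) coefficients in `ℂ[G_{p,n}]`. -/
def binomPoly (p n : ℕ) [NeZero p] (i : ℕ) :
    Polynomial (MonoidAlgebra ℂ (GPN p n)) :=
  (binomPolyC p n i).map (algebraMap ℂ (MonoidAlgebra ℂ (GPN p n)))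


section AuxProofs
open Polynomial Finset


/-- Real version of the binomial polynomial. -/
def Qpoly (p n i : ℕ) : Polynomial ℝ :=
  Polynomial.C ((n.factorial : ℝ))⁻¹ *
    ∏ m ∈ Finset.range n,
      ((Polynomial.X - 1) * Polynomial.C ((p : ℝ))⁻¹ +
        Polynomial.C ((n : ℝ) - (i : ℝ) - (m : ℝ)))

lemma natDegree_Qpoly_le (p n i : ℕ) : (Qpoly p n i).natDegree ≤ n := by
  refine (natDegree_mul_le).trans ?_
  simp only [natDegree_C, zero_add]
  refine (natDegree_prod_le _ _).trans ?_
  have : ∀ m ∈ Finset.range n,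
      ((X - 1) * Polynomial.C ((p : ℝ))⁻¹ +
        Polynomial.C ((n : ℝ) - (i : ℝ) - (m : ℝ))).natDegree ≤ 1 := by
    intro m _
    refine (natDegree_add_le _ _).trans ?_
    simp only [natDegree_C, max_le_iff]
    constructor
    · refine (natDegree_mul_le).trans ?_
      have h1 : ((X : ℝ[X]) - 1) = X - Polynomial.C 1 := by simp
      rw [h1, natDegree_X_sub_C, natDegree_C]
    · omega
  refine le_trans (Finset.sum_le_sum this) ?_
  simp

lemma eval_Qpoly (p n j : ℕ) [NeZero p] (hj : j ≤ n) (m : ℕ) :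
    (Qpoly p n j).eval (((p * m + 1 : ℕ) : ℝ)) = (Nat.choose (n + m - j) n : ℝ) := by
  have hp : (p : ℝ) ≠ 0 := Nat.cast_ne_zero.mpr (NeZero.ne p)
  have hfact : ∀ t ∈ Finset.range n,
      ((((p * m + 1 : ℕ) : ℝ) - 1) * ((p : ℝ))⁻¹ + ((n : ℝ) - (j : ℝ) - (t : ℝ)))
        = ((n + m - j : ℕ) : ℝ) - (t : ℝ) := by
    intro t _
    have h1 : (((p * m + 1 : ℕ) : ℝ) - 1) * ((p : ℝ))⁻¹ = (m : ℝ) := by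
      push_cast; field_simp; ring
    have h2 : ((n + m - j : ℕ) : ℝ) = (n : ℝ) + m - j := by
      have : j ≤ n + m := le_trans hj (Nat.le_add_right n m)
      push_cast [Nat.cast_sub this]; ring
    rw [h1, h2]; ring
  simp only [Qpoly, eval_mul, eval_C, eval_prod, eval_add, eval_sub, eval_one, eval_X]
  rw [Finset.prod_congr rfl hfact]
  rcases lt_or_ge m j with hm | hm
  · -- product vanishes
    have ha : n + m - j < n := by omega
    rw [Finset.prod_eq_zero (Finset.mem_range.mpr ha) (by simp)]
    rw [Nat.choose_eq_zero_of_lt ha]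
    simp
  · -- m ≥ j
    have ha : n ≤ n + m - j := by omega
    have : ∀ t ∈ Finset.range n, ((n + m - j : ℕ) : ℝ) - (t : ℝ)
        = (((n + m - j) - t : ℕ) : ℝ) := by
      intro t ht
      have h := Finset.mem_range.mp ht
      rw [Nat.cast_sub (show t ≤ n + m - j by omega)]
    rw [Finset.prod_congr rfl this, ← Nat.cast_prod,
      ← Nat.descFactorial_eq_prod_range, Nat.descFactorial_eq_factorial_mul_choose]
    push_cast
    rw [← mul_assoc, inv_mul_cancel₀ (by exact_mod_cast Nat.factorial_ne_zero n), one_mul]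

lemma coeff0_Qpoly (n j : ℕ) (hj : j + 1 ≤ n) : (Qpoly 1 n j).coeff 0 = 0 := by
  rw [coeff_zero_eq_eval_zero]
  simp only [Qpoly, eval_mul, eval_C, eval_prod, eval_add, eval_sub, eval_one, eval_X]
  have hz : ((0:ℝ) - 1) * ((1 : ℕ) : ℝ)⁻¹ + ((n : ℝ) - (j : ℝ) - ((n - 1 - j : ℕ) : ℝ)) = 0 := by
    have : ((n - 1 - j : ℕ) : ℝ) = (n : ℝ) - 1 - j := by
      rw [Nat.cast_sub (by omega), Nat.cast_sub (by omega)]; push_cast; ring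
    rw [this]; push_cast; ring
  rw [Finset.prod_eq_zero (Finset.mem_range.mpr (by omega : n - 1 - j < n)) hz, mul_zero]

lemma uEnt_eq_coeff (p n i j : ℕ) : uEnt p n i j = (Qpoly p n i).coeff (n - j) := rfl

lemma Qpoly_as_sum (p n j ℓ : ℕ) (hn : 1 ≤ n) (hℓ : ℓ = if p = 1 then n - 1 else n)
    (hj : j ≤ ℓ) :
    Qpoly p n j = ∑ k ∈ Finset.range (ℓ + 1),
      Polynomial.C ((Qpoly p n j).coeff (n - k)) * Polynomial.X ^ (n - k) := by
  have h0 : Qpoly p n j = ∑ d ∈ Finset.range (n + 1),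
      Polynomial.C ((Qpoly p n j).coeff d) * Polynomial.X ^ d := by
    conv_lhs => rw [(Qpoly p n j).as_sum_range' (n + 1)
      (Nat.lt_succ_of_le (natDegree_Qpoly_le p n j))]
    exact Finset.sum_congr rfl fun d _ => (C_mul_X_pow_eq_monomial).symm
  have h1 : Qpoly p n j = ∑ k ∈ Finset.range (n + 1),
      Polynomial.C ((Qpoly p n j).coeff (n - k)) * Polynomial.X ^ (n - k) := by
    have hr := Finset.sum_range_reflect (fun d => Polynomial.C ((Qpoly p n j).coeff d)
      * Polynomial.X ^ d) (n + 1)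
    simp only [Nat.add_sub_cancel] at hr
    rw [← hr] at h0
    exact h0
  by_cases hp : p = 1
  · have hℓ' : ℓ = n - 1 := by rw [hℓ, if_pos hp]
    have hn1 : n + 1 = (ℓ + 1) + 1 := by omega
    have hz : (Qpoly p n j).coeff (n - (ℓ + 1)) = 0 := by
      have h2 : n - (ℓ + 1) = 0 := by omega
      rw [h2, hp]; exact coeff0_Qpoly n j (by omega)
    conv_lhs => rw [h1, hn1, Finset.sum_range_succ, hz]
    simp
  · rw [hℓ, if_neg hp]; exact h1

lemma sum_uA (p n j ℓ : ℕ) [NeZero p] (hn : 1 ≤ n) (hℓ : ℓ = if p = 1 then n - 1 else n)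
    (hj : j ≤ ℓ) :
    ∑ k ∈ Finset.range (ℓ + 1), PowerSeries.C ((Qpoly p n j).coeff (n - k)) *
        PowerSeries.mk (fun a => ((p * a + 1 : ℕ) : ℝ) ^ (n - k))
      = PowerSeries.mk (fun m => (Nat.choose (n + m - j) n : ℝ)) := by
  have hjn : j ≤ n := by rw [hℓ] at hj; split_ifs at hj <;> omega
  ext m
  rw [map_sum, PowerSeries.coeff_mk]
  have : ∀ k ∈ Finset.range (ℓ + 1),
      (PowerSeries.coeff (R := ℝ) m) (PowerSeries.C ((Qpoly p n j).coeff (n - k)) *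
        PowerSeries.mk (fun a => ((p * a + 1 : ℕ) : ℝ) ^ (n - k)))
      = (Qpoly p n j).coeff (n - k) * ((p * m + 1 : ℕ) : ℝ) ^ (n - k) := by
    intro k _
    rw [PowerSeries.coeff_C_mul, PowerSeries.coeff_mk]
  rw [Finset.sum_congr rfl this, ← eval_Qpoly p n j hjn m]
  conv_rhs => rw [Qpoly_as_sum p n j ℓ hn hℓ hj]
  simp [eval_finset_sum]

lemma onesub_mul_F (n j : ℕ) (hn : 1 ≤ n) :
    ((1 - PowerSeries.X) ^ (n + 1) : PowerSeries ℝ) *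
        PowerSeries.mk (fun m => (Nat.choose (n + m - j) n : ℝ))
      = PowerSeries.X ^ j := by
  have hshift : PowerSeries.mk (fun m => (Nat.choose (n + m - j) n : ℝ))
      = PowerSeries.X ^ j * PowerSeries.mk (fun m => (Nat.choose (n + m) n : ℝ)) := by
    ext m
    rw [PowerSeries.coeff_mk, PowerSeries.coeff_X_pow_mul']
    split_ifs with h
    · rw [PowerSeries.coeff_mk]
      congr 2
      omega
    · have : n + m - j < n := by omega
      rw [Nat.choose_eq_zero_of_lt this, Nat.cast_zero]
  rw [hshift, ← mul_assoc, mul_comm ((1 - PowerSeries.X) ^ (n + 1) : PowerSeries ℝ),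
    mul_assoc]
  rw [mul_comm ((1 - PowerSeries.X) ^ (n + 1) : PowerSeries ℝ),
    PowerSeries.mk_add_choose_mul_one_sub_pow_eq_one, mul_one]

lemma orth (p n i j ℓ : ℕ) [NeZero p] (hn : 1 ≤ n)
    (hℓ : ℓ = if p = 1 then n - 1 else n) (hj : j ≤ ℓ) :
    ∑ k ∈ Finset.range (ℓ + 1), vEnt p n k i * uEnt p n j k
      = if i = j then 1 else 0 := by
  have key : ∀ k ∈ Finset.range (ℓ + 1), vEnt p n k i * uEnt p n j k
      = PowerSeries.coeff (R := ℝ) i (PowerSeries.C (uEnt p n j k) *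
          ((1 - PowerSeries.X) ^ (n + 1) *
            PowerSeries.mk fun a => ((p * a + 1 : ℕ) : ℝ) ^ (n - k))) := by
    intro k _
    rw [PowerSeries.coeff_C_mul, vEnt, mul_comm]
  rw [Finset.sum_congr rfl key, ← map_sum]
  have : ∑ k ∈ Finset.range (ℓ + 1), PowerSeries.C (uEnt p n j k) *
          ((1 - PowerSeries.X) ^ (n + 1) *
            PowerSeries.mk fun a => ((p * a + 1 : ℕ) : ℝ) ^ (n - k))
      = ((1 - PowerSeries.X) ^ (n + 1) : PowerSeries ℝ) *
          ∑ k ∈ Finset.range (ℓ + 1), PowerSeries.C (uEnt p n j k) *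
            PowerSeries.mk fun a => ((p * a + 1 : ℕ) : ℝ) ^ (n - k) := by
    rw [Finset.mul_sum]
    exact Finset.sum_congr rfl fun k _ => by ring
  rw [this]
  simp only [uEnt_eq_coeff]
  rw [sum_uA p n j ℓ hn hℓ hj, onesub_mul_F n j hn, PowerSeries.coeff_X_pow]

lemma binomPolyC_eq_map (p n i : ℕ) :
    binomPolyC p n i = (Qpoly p n i).map (algebraMap ℝ ℂ) := by
  simp only [binomPolyC, Qpoly, Polynomial.map_mul, Polynomial.map_prod, Polynomial.map_add,
    Polynomial.map_sub, Polynomial.map_one, Polynomial.map_C, Polynomial.map_X]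
  push_cast
  norm_num

end AuxProofs

/-- **Proposition.** (1) `Σ_{i=0}^{ℓ} binom(n + (x-1)/p - i, n) Θ_i = Σ_{k=0}^{ℓ} x^{n-k} e_{ℓ-k}`
as polynomials in `x` with coefficients in `ℂ[G_{p,n}]`, where `e_{ℓ-k} = Σ_i u_{ik} Θ_i`;
(2) `Θ_i = Σ_{k=0}^{ℓ} v_{ki} e_{ℓ-k}`. -/
theorem statement15 (p n : ℕ) [NeZero p] (hn : 1 ≤ n)
    (ℓ : ℕ) (hℓ : ℓ = if p = 1 then n - 1 else n) :
    (∑ i ∈ Finset.range (ℓ + 1), binomPoly p n i * Polynomial.C (Theta p n i)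
        = ∑ k ∈ Finset.range (ℓ + 1),
            Polynomial.X ^ (n - k) * Polynomial.C (eElt p n ℓ k))
      ∧ (∀ i ∈ Finset.range (ℓ + 1),
          Theta p n i
            = ∑ k ∈ Finset.range (ℓ + 1), ((vEnt p n k i : ℝ) : ℂ) • eElt p n ℓ k) := by
  constructor
  · -- Part (1)
    have hdecomp : ∀ i, i ≤ ℓ → binomPoly p n i
        = ∑ k ∈ Finset.range (ℓ + 1),
            Polynomial.C ((algebraMap ℂ (MonoidAlgebra ℂ (GPN p n))) ((uEnt p n i k : ℝ) : ℂ))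
              * Polynomial.X ^ (n - k) := by
      intro i hi
      rw [binomPoly, binomPolyC_eq_map, Polynomial.map_map]
      conv_lhs => rw [Qpoly_as_sum p n i ℓ hn hℓ hi]
      rw [Polynomial.map_sum]
      refine Finset.sum_congr rfl fun k _ => ?_
      rw [Polynomial.map_mul, Polynomial.map_C, Polynomial.map_pow, Polynomial.map_X,
        RingHom.comp_apply]
      rfl
    calc ∑ i ∈ Finset.range (ℓ + 1), binomPoly p n i * Polynomial.C (Theta p n i)
        = ∑ i ∈ Finset.range (ℓ + 1), ∑ k ∈ Finset.range (ℓ + 1),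
            Polynomial.C ((algebraMap ℂ (MonoidAlgebra ℂ (GPN p n))) ((uEnt p n i k : ℝ) : ℂ))
              * Polynomial.X ^ (n - k) * Polynomial.C (Theta p n i) := by
          refine Finset.sum_congr rfl fun i hi => ?_
          rw [hdecomp i (by have := Finset.mem_range.mp hi; omega), Finset.sum_mul]
      _ = ∑ k ∈ Finset.range (ℓ + 1), ∑ i ∈ Finset.range (ℓ + 1),
            Polynomial.C ((algebraMap ℂ (MonoidAlgebra ℂ (GPN p n))) ((uEnt p n i k : ℝ) : ℂ))
              * Polynomial.X ^ (n - k) * Polynomial.C (Theta p n i) := Finset.sum_comm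
      _ = ∑ k ∈ Finset.range (ℓ + 1),
            Polynomial.X ^ (n - k) * Polynomial.C (eElt p n ℓ k) := by
          refine Finset.sum_congr rfl fun k _ => ?_
          rw [eElt, map_sum, Finset.mul_sum]
          refine Finset.sum_congr rfl fun i _ => ?_
          rw [Algebra.smul_def, map_mul, ← mul_assoc, Polynomial.X_pow_mul]
  · -- Part (2)
    intro i hi
    have step : ∀ j ∈ Finset.range (ℓ + 1),
        ∑ k ∈ Finset.range (ℓ + 1),
            ((vEnt p n k i : ℝ) : ℂ) • (((uEnt p n j k : ℝ) : ℂ) • Theta p n j)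
          = if i = j then Theta p n j else 0 := by
      intro j hj
      have hjℓ : j ≤ ℓ := by have := Finset.mem_range.mp hj; omega
      have hterm : ∀ k ∈ Finset.range (ℓ + 1),
          ((vEnt p n k i : ℝ) : ℂ) • (((uEnt p n j k : ℝ) : ℂ) • Theta p n j)
            = (((vEnt p n k i * uEnt p n j k : ℝ) : ℂ)) • Theta p n j := by
        intro k _
        rw [smul_smul, ← Complex.ofReal_mul]
      rw [Finset.sum_congr rfl hterm, ← Finset.sum_smul]
      have hsum : (∑ k ∈ Finset.range (ℓ + 1), (((vEnt p n k i * uEnt p n j k : ℝ) : ℂ)))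
          = (((if i = j then (1 : ℝ) else 0) : ℝ) : ℂ) := by
        rw [← Complex.ofReal_sum]
        exact congrArg _ (orth p n i j ℓ hn hℓ hjℓ)
      rw [hsum]
      split_ifs <;> simp
    calc Theta p n i
        = ∑ j ∈ Finset.range (ℓ + 1), if i = j then Theta p n j else 0 := by
          rw [Finset.sum_ite_eq, if_pos hi]
      _ = ∑ j ∈ Finset.range (ℓ + 1), ∑ k ∈ Finset.range (ℓ + 1),
            ((vEnt p n k i : ℝ) : ℂ) • (((uEnt p n j k : ℝ) : ℂ) • Theta p n j) :=
          (Finset.sum_congr rfl step).symm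
      _ = ∑ k ∈ Finset.range (ℓ + 1), ((vEnt p n k i : ℝ) : ℂ) • eElt p n ℓ k := by
          rw [Finset.sum_comm]
          exact Finset.sum_congr rfl fun k _ => by rw [eElt, Finset.smul_sum]
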